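/- For all fixed integers 1 ≤ ℓ < k there exists a constant C = C(k, ℓ) > 0 such that for every n and every k-uniform ℓ-tree T on n vertices, R̂(T) ≤ C·n^{ℓ+1}. -/

import Mathlib

/-- A `k`-uniform hypergraph on a finite vertex set of naturals:
each edge is a `k`-element subset of the vertex set. -/
structure KHypergraph (k : ℕ) where
  verts : Finset ℕ
  edges : Finset (Finset ℕ)
  card_eq : ∀ e ∈ edges, e.card = k
  subset_verts : ∀ e ∈ edges, e ⊆ verts

namespace KHypergraph

/-- `H.IsCopy G f` : the injection `f` embeds `G` into `H` as a subhypergraph. -/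
def IsCopy {k : ℕ} (H G : KHypergraph k) (f : ℕ → ℕ) : Prop :=
  Set.InjOn f ↑G.verts ∧ Set.MapsTo f ↑G.verts ↑H.verts ∧
    ∀ e ∈ G.edges, e.image f ∈ H.edges

/-- `H.Arrows G` : every 2-coloring of the edges of `H` yields a monochromatic copy of `G`. -/
def Arrows {k : ℕ} (H G : KHypergraph k) : Prop :=
  ∀ χ : Finset ℕ → Bool, ∃ (f : ℕ → ℕ) (c : Bool),
    H.IsCopy G f ∧ ∀ e ∈ G.edges, χ (e.image f) = c

/-- The size-Ramsey number `R̂(G)`: the least number of edges of a hypergraph `H` with `H → G`. -/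
noncomputable def sizeRamsey {k : ℕ} (G : KHypergraph k) : ℕ :=
  sInf { m | ∃ H : KHypergraph k, H.Arrows G ∧ H.edges.card = m }

/-- The complete `k`-uniform hypergraph on `N` vertices. -/
def completeHG (k N : ℕ) : KHypergraph k where
  verts := Finset.range N
  edges := Finset.powersetCard k (Finset.range N)
  card_eq := fun _ he => (Finset.mem_powersetCard.mp he).2
  subset_verts := fun _ he => (Finset.mem_powersetCard.mp he).1

/-- The Ramsey number `R(G)`: the least `N` with `K_N^(k) → G`. -/
noncomputable def ramsey {k : ℕ} (G : KHypergraph k) : ℕ :=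
  sInf { N | (completeHG k N).Arrows G }

end KHypergraph

/-- `IsLTree k ℓ T` : `T` is a `k`-uniform `ℓ`-tree, i.e. its edges can be ordered
`e₀, …, e_{m−1}` so that each later edge meets the union of the previous ones in at
most `ℓ` vertices, all of which lie in a single previous edge; the vertex set is
the union of the edges. -/
def IsLTree (k ℓ : ℕ) (T : KHypergraph k) : Prop :=
  T.verts = T.edges.biUnion id ∧
  ∃ (m : ℕ) (e : Fin m → Finset ℕ),
    Function.Injective e ∧
    T.edges = Finset.image e Finset.univ ∧
    ∀ j : Fin m, 0 < (j : ℕ) →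
      (e j ∩ (Finset.univ.filter fun i => i < j).biUnion e).card ≤ ℓ ∧
      ∃ i : Fin m, i < j ∧ e j ∩ (Finset.univ.filter fun i => i < j).biUnion e ⊆ e i

open Finset Polynomial


lemma master {q : ℕ} [Fact (Nat.Prime q)] {d : ℕ} (c : Fin d → ZMod q) (T : Finset (ZMod q))
    (hc : ∀ j : Fin d, T.card ≤ (j : ℕ) → c j = 0)
    (hv : ∀ x ∈ T, ∑ j, c j * x ^ (j : ℕ) = 0) : ∀ j, c j = 0 := by
  set p : Polynomial (ZMod q) := ∑ j : Fin d, Polynomial.C (c j) * Polynomial.X ^ (j:ℕ) with hp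
  have hcoeff : ∀ j : Fin d, p.coeff (j:ℕ) = c j := by
    intro j
    rw [hp, Polynomial.finset_sum_coeff, Finset.sum_eq_single j]
    · simp
    · intro b _ hb
      rw [Polynomial.coeff_C_mul, Polynomial.coeff_X_pow, if_neg, mul_zero]
      exact fun h => hb (Fin.ext h.symm)
    · simp
  have hp0 : p = 0 := by
    rcases Nat.eq_zero_or_pos T.card with h0 | h0
    · rw [hp]
      refine Finset.sum_eq_zero fun j _ => ?_
      rw [hc j (by omega), map_zero, zero_mul]
    · apply Polynomial.eq_zero_of_natDegree_lt_card_of_eval_eq_zero' p T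
      · intro x hx
        rw [hp]
        simp only [Polynomial.eval_finset_sum, Polynomial.eval_mul, Polynomial.eval_C,
          Polynomial.eval_pow, Polynomial.eval_X]
        exact hv x hx
      · refine lt_of_le_of_lt (Polynomial.natDegree_sum_le_of_forall_le _ _ ?_)
          (Nat.sub_lt h0 one_pos)
        intro j _
        by_cases hj : (j:ℕ) < T.card
        · exact (Polynomial.natDegree_C_mul_X_pow_le _ _).trans (by omega)
        · rw [hc j (by omega), map_zero, zero_mul]
          simp
  intro j
  rw [← hcoeff j, hp0, Polynomial.coeff_zero]


def covered (F : Finset (Finset ℕ)) (s : ℕ) : Finset (Finset ℕ) :=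
  ((F.sup id).powersetCard s).filter fun S => ∃ E ∈ F, S ⊆ E

lemma mem_covered {F : Finset (Finset ℕ)} {s : ℕ} {S : Finset ℕ} :
    S ∈ covered F s ↔ S.card = s ∧ ∃ E ∈ F, S ⊆ E := by
  constructor
  · intro h
    rw [covered, Finset.mem_filter, Finset.mem_powersetCard] at h
    exact ⟨h.1.2, h.2⟩
  · rintro ⟨hcard, E, hE, hSE⟩
    rw [covered, Finset.mem_filter, Finset.mem_powersetCard]
    exact ⟨⟨hSE.trans (Finset.le_sup (f := id) hE), hcard⟩, E, hE, hSE⟩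

lemma covered_mono {F' F : Finset (Finset ℕ)} (h : F' ⊆ F) (s : ℕ) :
    covered F' s ⊆ covered F s := by
  intro S hS
  rw [mem_covered] at hS ⊢
  exact ⟨hS.1, hS.2.imp fun E hE => ⟨h hE.1, hE.2⟩⟩

lemma clean (δ : ℕ → ℕ) (ℓ : ℕ) :
    ∀ N (F : Finset (Finset ℕ)), F.card ≤ N →
    ∃ G, G ⊆ F ∧
      (∀ S : Finset ℕ, S.card ≤ ℓ → (∃ E ∈ G, S ⊆ E) →
        δ S.card ≤ (G.filter fun E => S ⊆ E).card) ∧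
      F.card ≤ G.card + ∑ s ∈ Finset.range (ℓ+1), δ s * (covered F s).card := by
  intro N
  induction N with
  | zero =>
    intro F hF
    have : F = ∅ := Finset.card_eq_zero.mp (Nat.le_zero.mp hF)
    subst this
    exact ⟨∅, Finset.Subset.refl _, fun S _ h => absurd h (by simp), by simp⟩
  | succ N ih =>
    intro F hF
    by_cases hgood : ∀ S : Finset ℕ, S.card ≤ ℓ → (∃ E ∈ F, S ⊆ E) →
        δ S.card ≤ (F.filter fun E => S ⊆ E).card
    · exact ⟨F, Finset.Subset.refl _, hgood, Nat.le_add_right _ _⟩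
    · push_neg at hgood
      obtain ⟨S, hSl, hScov, hSdeg⟩ := hgood
      set F' := F.filter (fun E => ¬ S ⊆ E) with hF'
      have hsplit : (F.filter fun E => S ⊆ E).card + F'.card = F.card :=
        Finset.card_filter_add_card_filter_not _
      have hdeg1 : 1 ≤ (F.filter fun E => S ⊆ E).card := by
        obtain ⟨E, hE, hSE⟩ := hScov
        exact Finset.card_pos.mpr ⟨E, Finset.mem_filter.mpr ⟨hE, hSE⟩⟩
      have hF'F : F' ⊆ F := Finset.filter_subset _ _
      have hF'card : F'.card ≤ N := by omega
      obtain ⟨G, hGF', hGgood, hGbound⟩ := ih F' hF'card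
      refine ⟨G, hGF'.trans hF'F, hGgood, ?_⟩
      -- sum bound
      have hmem : S.card ∈ Finset.range (ℓ+1) := Finset.mem_range.mpr (by omega)
      have hcovlt : (covered F' S.card).card + 1 ≤ (covered F S.card).card := by
        have hss : covered F' S.card ⊂ covered F S.card := by
          refine (Finset.ssubset_iff_of_subset (covered_mono hF'F _)).mpr
            ⟨S, mem_covered.mpr ⟨rfl, hScov⟩, fun hc => ?_⟩
          obtain ⟨-, E, hE, hSE⟩ := mem_covered.mp hc
          exact (Finset.mem_filter.mp hE).2 hSE
        exact Finset.card_lt_card hss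
      have hsum : ∑ s ∈ Finset.range (ℓ+1), δ s * (covered F' s).card + δ S.card ≤
          ∑ s ∈ Finset.range (ℓ+1), δ s * (covered F s).card := by
        rw [← Finset.add_sum_erase _ _ hmem, ← Finset.add_sum_erase _ _ hmem]
        have h1 : δ S.card * (covered F' S.card).card + δ S.card ≤
            δ S.card * (covered F S.card).card := by
          calc δ S.card * (covered F' S.card).card + δ S.card
              = δ S.card * ((covered F' S.card).card + 1) := by ring
            _ ≤ δ S.card * (covered F S.card).card := Nat.mul_le_mul_left _ hcovlt
        have h2 : ∑ s ∈ (Finset.range (ℓ+1)).erase S.card, δ s * (covered F' s).card ≤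
            ∑ s ∈ (Finset.range (ℓ+1)).erase S.card, δ s * (covered F s).card :=
          Finset.sum_le_sum fun s _ => Nat.mul_le_mul_left _
            (Finset.card_le_card (covered_mono hF'F s))
        omega
      have : F.card + 1 ≤ F'.card + δ S.card := by omega
      calc F.card ≤ F'.card + δ S.card - 1 := by omega
        _ ≤ G.card + ∑ s ∈ Finset.range (ℓ+1), δ s * (covered F' s).card + δ S.card - 1 := by omega
        _ ≤ G.card + ∑ s ∈ Finset.range (ℓ+1), δ s * (covered F s).card := by omega

section host

variable (k ℓ q : ℕ)

def enc (i : Fin k) (x : ZMod q) : ℕ := x.val + (i : ℕ) * q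

def ev (a : Fin (ℓ+1) → ZMod q) (x : ZMod q) : ZMod q := ∑ j, a j * x ^ (j : ℕ)

def edgeOf (a : Fin (ℓ+1) → ZMod q) : Finset ℕ :=
  Finset.univ.image fun i : Fin k => enc k q i (ev ℓ q a ((i : ℕ) : ZMod q))

variable {k ℓ q}

variable [Fact (Nat.Prime q)]

lemma qpos : 0 < q := (Fact.out : Nat.Prime q).pos

lemma enc_mod (i : Fin k) (x : ZMod q) : (enc k q i x) % q = x.val := by
  have : NeZero q := ⟨(Fact.out : Nat.Prime q).ne_zero⟩
  rw [enc, Nat.add_mul_mod_self_right, Nat.mod_eq_of_lt (ZMod.val_lt x)]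

lemma enc_div (i : Fin k) (x : ZMod q) : (enc k q i x) / q = (i : ℕ) := by
  have : NeZero q := ⟨(Fact.out : Nat.Prime q).ne_zero⟩
  rw [enc, Nat.add_mul_div_right _ _ qpos, Nat.div_eq_of_lt (ZMod.val_lt x), zero_add]

lemma enc_lt (i : Fin k) (x : ZMod q) : enc k q i x < k * q := by
  have : NeZero q := ⟨(Fact.out : Nat.Prime q).ne_zero⟩
  have h1 : x.val < q := ZMod.val_lt x
  have h2 : (i : ℕ) + 1 ≤ k := i.2
  calc enc k q i x < q + (i : ℕ) * q := by rw [enc]; omega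
    _ = ((i : ℕ) + 1) * q := by ring
    _ ≤ k * q := Nat.mul_le_mul_right q h2

lemma enc_inj {i i' : Fin k} {x x' : ZMod q} (h : enc k q i x = enc k q i' x') :
    i = i' ∧ x = x' := by
  have : NeZero q := ⟨(Fact.out : Nat.Prime q).ne_zero⟩
  have h1 : (i : ℕ) = (i' : ℕ) := by rw [← enc_div i x, ← enc_div i' x', h]
  have h2 : x.val = x'.val := by rw [← enc_mod i x, ← enc_mod i' x', h]
  exact ⟨Fin.ext h1, ZMod.val_injective q h2⟩

lemma ev_sub (a b : Fin (ℓ+1) → ZMod q) (x : ZMod q) :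
    ev ℓ q (a - b) x = ev ℓ q a x - ev ℓ q b x := by
  rw [ev, ev, ev, ← Finset.sum_sub_distrib]
  congr 1
  ext j
  rw [Pi.sub_apply, sub_mul]

lemma card_edgeOf (a : Fin (ℓ+1) → ZMod q) : (edgeOf k ℓ q a).card = k := by
  rw [edgeOf, Finset.card_image_of_injective _ (fun i i' h => (enc_inj h).1),
    Finset.card_univ, Fintype.card_fin]

lemma alpha_inj (hkq : k ≤ q) : Function.Injective (fun i : Fin k => ((i : ℕ) : ZMod q)) := by
  have : NeZero q := ⟨(Fact.out : Nat.Prime q).ne_zero⟩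
  intro i i' h
  have h2 : (((i : ℕ) : ZMod q)).val = (((i' : ℕ) : ZMod q)).val := congrArg ZMod.val h
  rw [ZMod.val_natCast_of_lt (lt_of_lt_of_le i.2 hkq),
    ZMod.val_natCast_of_lt (lt_of_lt_of_le i'.2 hkq)] at h2
  exact Fin.ext h2

lemma mem_edgeOf_eval {a : Fin (ℓ+1) → ZMod q} {w : ℕ} (hw : w ∈ edgeOf k ℓ q a) :
    w / q < k ∧ ev ℓ q a ((w / q : ℕ) : ZMod q) = ((w % q : ℕ) : ZMod q) := by
  have : NeZero q := ⟨(Fact.out : Nat.Prime q).ne_zero⟩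
  rw [edgeOf, Finset.mem_image] at hw
  obtain ⟨i, -, hi⟩ := hw
  have hdiv : w / q = (i : ℕ) := by rw [← hi, enc_div]
  have hmod : w % q = (ev ℓ q a ((i : ℕ) : ZMod q)).val := by rw [← hi, enc_mod]
  refine ⟨hdiv ▸ i.2, ?_⟩
  rw [hdiv, hmod, ZMod.natCast_zmod_val]

lemma edgeOf_injective (hlk : ℓ < k) (hkq : k ≤ q) :
    Function.Injective (edgeOf k ℓ q) := by
  intro a b hab
  have heval : ∀ i : Fin k, ev ℓ q a ((i : ℕ) : ZMod q) = ev ℓ q b ((i : ℕ) : ZMod q) := by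
    intro i
    have hmem : enc k q i (ev ℓ q a ((i : ℕ) : ZMod q)) ∈ edgeOf k ℓ q b := by
      rw [← hab, edgeOf]
      exact Finset.mem_image_of_mem _ (Finset.mem_univ i)
    rw [edgeOf, Finset.mem_image] at hmem
    obtain ⟨i', -, hi'⟩ := hmem
    obtain ⟨rfl, hx⟩ := enc_inj hi'
    exact hx.symm
  set T : Finset (ZMod q) := Finset.univ.image (fun i : Fin k => ((i : ℕ) : ZMod q)) with hT
  have hTcard : T.card = k := by
    rw [hT, Finset.card_image_of_injective _ (alpha_inj hkq), Finset.card_univ,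
      Fintype.card_fin]
  have hzero : ∀ j, (a - b) j = 0 := by
    apply master (a - b) T
    · intro j hj
      rw [hTcard] at hj
      exact absurd j.2 (by omega)
    · intro x hx
      rw [hT, Finset.mem_image] at hx
      obtain ⟨i, -, rfl⟩ := hx
      have := ev_sub a b ((i : ℕ) : ZMod q)
      rw [ev] at this
      rw [this, heval i, sub_self]
  funext j
  have := hzero j
  rw [Pi.sub_apply, sub_eq_zero] at this
  exact this

lemma fiber_bound (hlk : ℓ < k) (hkq : k ≤ q) (W : Finset ℕ)
    (h1 : 1 ≤ W.card) (h2 : W.card ≤ ℓ + 1) :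
    ((Finset.univ : Finset (Fin (ℓ+1) → ZMod q)).filter
      fun a => W ⊆ edgeOf k ℓ q a).card ≤ q ^ (ℓ + 1 - W.card) := by
  classical
  have : NeZero q := ⟨(Fact.out : Nat.Prime q).ne_zero⟩
  set t := W.card with ht
  by_cases hne : ∃ a₀, a₀ ∈ (Finset.univ : Finset (Fin (ℓ+1) → ZMod q)).filter
      (fun a => W ⊆ edgeOf k ℓ q a)
  · obtain ⟨a₀, ha₀⟩ := hne
    have ha₀' : W ⊆ edgeOf k ℓ q a₀ := (Finset.mem_filter.mp ha₀).2
    -- the evaluation points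
    set T : Finset (ZMod q) := W.image (fun w => ((w / q : ℕ) : ZMod q)) with hT
    have hwdet : ∀ w ∈ W, ∀ w' ∈ W, w / q = w' / q → w = w' := by
      intro w hw w' hw' hd
      obtain ⟨hwk, hwe⟩ := mem_edgeOf_eval (ha₀' hw)
      obtain ⟨hwk', hwe'⟩ := mem_edgeOf_eval (ha₀' hw')
      rw [hd] at hwe
      have hmod : w % q = w' % q := by
        have := hwe.symm.trans hwe'
        have := congrArg ZMod.val (hwe.symm.trans hwe')
        rw [ZMod.val_natCast_of_lt (Nat.mod_lt w (qpos (q := q))),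
          ZMod.val_natCast_of_lt (Nat.mod_lt w' (qpos (q := q)))] at this
        exact this
      have e1 := Nat.div_add_mod w q
      have e2 := Nat.div_add_mod w' q
      rw [hd, hmod] at e1
      omega
    have hTinj : Set.InjOn (fun w => ((w / q : ℕ) : ZMod q)) ↑W := by
      intro w hw w' hw' hww
      have hwk := (mem_edgeOf_eval (ha₀' hw)).1
      have hwk' := (mem_edgeOf_eval (ha₀' hw')).1
      have : w / q = w' / q := by
        rw [← ZMod.val_natCast_of_lt (lt_of_lt_of_le hwk hkq),
          ← ZMod.val_natCast_of_lt (lt_of_lt_of_le hwk' hkq)]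
        exact congrArg ZMod.val hww
      exact hwdet w hw w' hw' this
    have hTcard : T.card = t := by rw [hT, Finset.card_image_of_injOn hTinj]
    -- the top coefficient map
    have hmaplt : ∀ r : Fin (ℓ + 1 - t), t + (r : ℕ) < ℓ + 1 := fun r => by
      have := r.2; omega
    set top : (Fin (ℓ+1) → ZMod q) → (Fin (ℓ + 1 - t) → ZMod q) :=
      fun a r => a ⟨t + (r : ℕ), hmaplt r⟩ with htop
    have hinj : Set.InjOn top ↑((Finset.univ : Finset (Fin (ℓ+1) → ZMod q)).filter
        (fun a => W ⊆ edgeOf k ℓ q a)) := by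
      intro a ha b hb hab
      have haW : W ⊆ edgeOf k ℓ q a := by
        have := Finset.mem_coe.mp ha; exact (Finset.mem_filter.mp this).2
      have hbW : W ⊆ edgeOf k ℓ q b := by
        have := Finset.mem_coe.mp hb; exact (Finset.mem_filter.mp this).2
      have hzero : ∀ j, (a - b) j = 0 := by
        apply master (a - b) T
        · intro j hj
          rw [hTcard] at hj
          have hjval : (j : ℕ) = t + ((j : ℕ) - t) := by omega
          have hlt : (j : ℕ) - t < ℓ + 1 - t := by have := j.2; omega
          have := congrFun hab ⟨(j : ℕ) - t, hlt⟩
          rw [htop] at this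
          simp only at this
          have hjeq : (⟨t + ((j : ℕ) - t), hmaplt ⟨(j : ℕ) - t, hlt⟩⟩ : Fin (ℓ+1)) = j :=
            Fin.ext (by show t + ((j : ℕ) - t) = (j : ℕ); omega)
          rw [hjeq] at this
          rw [Pi.sub_apply, this, sub_self]
        · intro x hx
          rw [hT, Finset.mem_image] at hx
          obtain ⟨w, hw, rfl⟩ := hx
          have hae := (mem_edgeOf_eval (haW hw)).2
          have hbe := (mem_edgeOf_eval (hbW hw)).2
          have := ev_sub a b ((w / q : ℕ) : ZMod q)
          rw [ev] at this
          rw [this, hae, hbe, sub_self]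
      funext j
      have := hzero j
      rw [Pi.sub_apply, sub_eq_zero] at this
      exact this
    calc ((Finset.univ : Finset (Fin (ℓ+1) → ZMod q)).filter
          (fun a => W ⊆ edgeOf k ℓ q a)).card
        ≤ (Finset.univ : Finset (Fin (ℓ + 1 - t) → ZMod q)).card :=
          Finset.card_le_card_of_injOn top (fun a _ => Finset.mem_univ _) hinj
      _ = q ^ (ℓ + 1 - t) := by
          rw [Finset.card_univ, Fintype.card_fun, ZMod.card, Fintype.card_fin]
  · push_neg at hne
    have : ((Finset.univ : Finset (Fin (ℓ+1) → ZMod q)).filter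
        (fun a => W ⊆ edgeOf k ℓ q a)) = ∅ := by
      apply Finset.eq_empty_of_forall_notMem
      exact hne
    rw [this, Finset.card_empty]
    exact Nat.zero_le _

end host

lemma embed {k ℓ n : ℕ} (H : KHypergraph k) (G : Finset (Finset ℕ)) (hGH : G ⊆ H.edges)
    (hGne : G.Nonempty)
    (ext : ∀ S U : Finset ℕ, S.card ≤ ℓ → (∃ E ∈ G, S ⊆ E) → U.card ≤ n →
      ∃ E ∈ G, S ⊆ E ∧ (E \ S) ∩ U = ∅)
    (T : KHypergraph k) (hT : IsLTree k ℓ T) (hn : T.verts.card ≤ n) :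
    ∃ f : ℕ → ℕ, H.IsCopy T f ∧ ∀ e ∈ T.edges, e.image f ∈ G := by
  classical
  obtain ⟨hverts, m, e, einj, hedges, htree⟩ := hT
  set V : ℕ → Finset ℕ :=
    fun j => (Finset.univ.filter fun i : Fin m => (i : ℕ) < j).biUnion e with hV
  have hVsub : ∀ j, V j ⊆ T.verts := by
    intro j x hx
    rw [hV] at hx
    obtain ⟨i, -, hxi⟩ := Finset.mem_biUnion.mp hx
    rw [hverts]
    refine Finset.mem_biUnion.mpr ⟨e i, ?_, hxi⟩
    rw [hedges]
    exact Finset.mem_image_of_mem e (Finset.mem_univ i)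
  have heiV : ∀ (i : Fin m) (j : ℕ), (i : ℕ) < j → e i ⊆ V j := by
    intro i j hij x hx
    exact Finset.mem_biUnion.mpr ⟨i, Finset.mem_filter.mpr ⟨Finset.mem_univ i, hij⟩, hx⟩
  have key : ∀ j, j ≤ m → ∃ f : ℕ → ℕ, Set.InjOn f ↑(V j) ∧
      Set.MapsTo f ↑(V j) ↑H.verts ∧ ∀ i : Fin m, (i : ℕ) < j → (e i).image f ∈ G := by
    intro j
    induction j with
    | zero =>
      intro _
      have hV0 : V 0 = ∅ := by simp [hV]
      refine ⟨id, by rw [hV0]; simp, ?_, fun i hi => absurd hi (by omega)⟩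
      rw [hV0]
      intro x hx
      simp at hx
    | succ j ih =>
      intro hj1
      have hjm : j < m := hj1
      obtain ⟨f, hinj, hmaps, hfG⟩ := ih (le_of_lt hjm)
      set jF : Fin m := ⟨j, hjm⟩ with hjF
      have hjFval : (jF : ℕ) = j := rfl
      set S : Finset ℕ := e jF ∩ V j with hS
      have hSsub : S ⊆ e jF := Finset.inter_subset_left
      have hSV : S ⊆ V j := Finset.inter_subset_right
      have hScard : S.card ≤ ℓ ∧ ∃ E' ∈ G, S.image f ⊆ E' := by
        rcases Nat.eq_zero_or_pos j with h0 | h0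
        · have : S = ∅ := by
            rw [hS, h0]
            have : V 0 = ∅ := by simp [hV]
            rw [this, Finset.inter_empty]
          obtain ⟨E', hE'⟩ := hGne
          rw [this]
          exact ⟨by simp, E', hE', by simp⟩
        · have hfilt : (Finset.univ.filter fun i : Fin m => i < jF) =
              (Finset.univ.filter fun i : Fin m => (i : ℕ) < j) := by
            apply Finset.filter_congr
            intro i _
            simp only [Fin.lt_def, hjFval]
          have htj := htree jF (by omega)
          rw [hfilt] at htj
          obtain ⟨hcard, i₀, hi₀lt, hi₀sub⟩ := htj
          refine ⟨hcard, (e i₀).image f, hfG i₀ ?_, Finset.image_subset_image hi₀sub⟩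
          rw [Fin.lt_def] at hi₀lt
          omega
      obtain ⟨hSl, hScov⟩ := hScard
      set fS : Finset ℕ := S.image f with hfS
      have hfScard : fS.card = S.card :=
        Finset.card_image_of_injOn (hinj.mono (by exact_mod_cast hSV))
      set U : Finset ℕ := (V j).image f with hU
      have hUcard : U.card ≤ n :=
        le_trans Finset.card_image_le (le_trans (Finset.card_le_card (hVsub j)) hn)
      obtain ⟨E, hEG, hfSE, hdisj⟩ := ext fS U (hfScard ▸ hSl) hScov hUcard
      set D : Finset ℕ := e jF \ S with hD
      have hDV : ∀ v ∈ D, v ∉ V j := by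
        intro v hv hvV
        have : v ∈ S := Finset.mem_inter.mpr ⟨(Finset.mem_sdiff.mp hv).1, hvV⟩
        exact (Finset.mem_sdiff.mp hv).2 this
      have hejcard : (e jF).card = k := T.card_eq (e jF)
        (by rw [hedges]; exact Finset.mem_image_of_mem e (Finset.mem_univ jF))
      have hEcard : E.card = k := H.card_eq E (hGH hEG)
      have hcardeq : (E \ fS).card = D.card := by
        rw [Finset.card_sdiff_of_subset hfSE, Finset.card_sdiff_of_subset hSsub, hEcard, hejcard, hfScard]
      set gD := D.orderIsoOfFin (rfl : D.card = D.card) with hgD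
      set gE := (E \ fS).orderIsoOfFin hcardeq with hgE
      set f' : ℕ → ℕ := fun v => if h : v ∈ D then (gE (gD.symm ⟨v, h⟩) : ℕ) else f v with hf'
      have hold : ∀ v ∈ V j, f' v = f v := by
        intro v hv
        rw [hf']
        exact dif_neg (fun hvD => hDV v hvD hv)
      have hnew : ∀ v (h : v ∈ D), f' v = (gE (gD.symm ⟨v, h⟩) : ℕ) := by
        intro v h
        exact dif_pos h
      have hnewmem : ∀ v ∈ D, f' v ∈ E \ fS := by
        intro v h
        rw [hnew v h]
        exact (gE (gD.symm ⟨v, h⟩)).2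
      have hnewinj : ∀ v ∈ D, ∀ w ∈ D, f' v = f' w → v = w := by
        intro v hv w hw hvw
        rw [hnew v hv, hnew w hw] at hvw
        have := gD.symm.injective (gE.injective (Subtype.ext hvw))
        exact congrArg Subtype.val this
      have himD : D.image f' = E \ fS := by
        apply Finset.eq_of_subset_of_card_le
        · intro x hx
          obtain ⟨v, hv, rfl⟩ := Finset.mem_image.mp hx
          exact hnewmem v hv
        · rw [Finset.card_image_of_injOn (fun v hv w hw => hnewinj v hv w hw), hcardeq]
      have hVj1 : V (j+1) = V j ∪ e jF := by
        ext x
        rw [hV]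
        simp only [Finset.mem_biUnion, Finset.mem_filter, Finset.mem_univ, true_and,
          Finset.mem_union]
        constructor
        · rintro ⟨i, hi, hx⟩
          rcases Nat.lt_or_ge (i : ℕ) j with h | h
          · exact Or.inl ⟨i, h, hx⟩
          · have : i = jF := Fin.ext (by omega)
            exact Or.inr (this ▸ hx)
        · rintro (⟨i, hi, hx⟩ | hx)
          · exact ⟨i, by omega, hx⟩
          · exact ⟨jF, by omega, hx⟩
      have hSD : S ∪ D = e jF := Finset.union_sdiff_of_subset hSsub
      have hDmem : ∀ v, v ∈ V (j+1) → v ∉ D → v ∈ V j := by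
        intro v hv hvD
        rw [hVj1, Finset.mem_union] at hv
        rcases hv with h | h
        · exact h
        · have : v ∈ S ∪ D := hSD ▸ h
          rcases Finset.mem_union.mp this with h' | h'
          · exact hSV h'
          · exact absurd h' hvD
      have hfU : ∀ v ∈ V j, f v ∈ U := fun v hv => Finset.mem_image_of_mem f hv
      have hdisj' : ∀ x, x ∈ E \ fS → x ∉ U := by
        intro x hx hxU
        have : x ∈ (E \ fS) ∩ U := Finset.mem_inter.mpr ⟨hx, hxU⟩
        rw [hdisj] at this
        exact absurd this (Finset.notMem_empty x)
      refine ⟨f', ?_, ?_, ?_⟩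
      · -- injectivity
        intro x hx y hy hxy
        have hx' : x ∈ V (j+1) := hx
        have hy' : y ∈ V (j+1) := hy
        by_cases hxD : x ∈ D <;> by_cases hyD : y ∈ D
        · exact hnewinj x hxD y hyD hxy
        · have hyV : y ∈ V j := hDmem y hy' hyD
          rw [hold y hyV] at hxy
          exact absurd (hxy ▸ hfU y hyV) (hdisj' _ (hnewmem x hxD))
        · have hxV : x ∈ V j := hDmem x hx' hxD
          rw [hold x hxV] at hxy
          exact absurd (hxy ▸ hfU x hxV) (hdisj' _ (hnewmem y hyD))
        · have hxV : x ∈ V j := hDmem x hx' hxD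
          have hyV : y ∈ V j := hDmem y hy' hyD
          rw [hold x hxV, hold y hyV] at hxy
          exact hinj (Finset.mem_coe.mpr hxV) (Finset.mem_coe.mpr hyV) hxy
      · -- maps to
        intro x hx
        have hx' := Finset.mem_coe.mp hx
        by_cases hxD : x ∈ D
        · have := hnewmem x hxD
          exact Finset.mem_coe.mpr (H.subset_verts E (hGH hEG) (Finset.mem_sdiff.mp this).1)
        · have hxV : x ∈ V j := hDmem x hx' hxD
          rw [hold x hxV]
          exact hmaps (Finset.mem_coe.mpr hxV)
      · -- edges
        intro i hi
        rcases Nat.lt_or_ge (i : ℕ) j with h | h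
        · have : (e i).image f' = (e i).image f := by
            apply Finset.image_congr
            intro x hx
            exact hold x (heiV i j h hx)
          rw [this]
          exact hfG i h
        · have hij : i = jF := Fin.ext (by omega)
          subst hij
          have : (e jF).image f' = E := by
            rw [← hSD, Finset.image_union, himD]
            have hSim : S.image f' = fS := by
              rw [hfS]
              apply Finset.image_congr
              intro x hx
              exact hold x (hSV hx)
            rw [hSim, Finset.union_sdiff_of_subset hfSE]
          rw [this]
          exact hEG
  obtain ⟨f, hinj, hmaps, hfG⟩ := key m le_rfl
  have hVm : V m = T.verts := by
    have hfilt : (Finset.univ.filter fun i : Fin m => (i : ℕ) < m) = Finset.univ :=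
      Finset.filter_true_of_mem fun i _ => i.2
    rw [hverts, hedges, Finset.image_biUnion, hV]
    simp only [hfilt]
    rfl
  have hedgeG : ∀ e' ∈ T.edges, e'.image f ∈ G := by
    intro e' he'
    rw [hedges] at he'
    obtain ⟨i, -, rfl⟩ := Finset.mem_image.mp he'
    exact hfG i i.2
  exact ⟨f, ⟨by rw [← hVm]; exact hinj, by rw [← hVm]; exact hmaps,
    fun e' he' => hGH (hedgeG e' he')⟩, hedgeG⟩


set_option maxHeartbeats 1000000 in
/-- For fixed `1 ≤ ℓ < k` there is a constant `C > 0` such that every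
`k`-uniform `ℓ`-tree `T` on `n` vertices satisfies `R̂(T) ≤ C·n^{ℓ+1}`. -/
theorem stmt1 (k ℓ : ℕ) (h1 : 1 ≤ ℓ) (h2 : ℓ < k) :
    ∃ C : ℝ, 0 < C ∧ ∀ n : ℕ, ∀ T : KHypergraph k, IsLTree k ℓ T → T.verts.card = n →
      (T.sizeRamsey : ℝ) ≤ C * (n : ℝ) ^ (ℓ + 1) := by
  classical
  have hk2 : 2 ≤ k := by omega
  set K : ℕ := 4 * (ℓ + 1) * k ^ ℓ + k with hK
  have hKk : k ≤ K := Nat.le_add_left k _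
  have hK0 : 0 < K := by omega
  refine ⟨((2 * K : ℕ) : ℝ) ^ (ℓ + 1), by
    apply pow_pos
    exact_mod_cast Nat.pos_of_ne_zero (by omega), ?_⟩
  intro n T hT hn
  rcases Nat.eq_zero_or_pos n with hn0 | hn0
  · -- trivial case : empty tree
    subst hn0
    have hv : T.verts = ∅ := Finset.card_eq_zero.mp hn
    have he : T.edges = ∅ := by
      apply Finset.eq_empty_of_forall_notMem
      intro E hE
      have hc := T.card_eq E hE
      have hs := T.subset_verts E hE
      rw [hv, Finset.subset_empty] at hs
      rw [hs, Finset.card_empty] at hc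
      omega
    have harr : T.Arrows T := by
      intro χ
      refine ⟨id, true, ⟨?_, ?_, ?_⟩, ?_⟩
      · rw [hv]; simp
      · rw [hv]; simp
      · rw [he]; simp
      · rw [he]; simp
    have h0 : T.sizeRamsey = 0 :=
      Nat.le_zero.mp (Nat.sInf_le ⟨T, harr, by rw [he, Finset.card_empty]⟩)
    rw [h0]
    simp
  · -- main case
    set M : ℕ := K * n with hM
    have hM0 : M ≠ 0 := by positivity
    obtain ⟨q, hqp, hqM, hq2M⟩ := Nat.exists_prime_lt_and_le_two_mul M hM0
    haveI : Fact (Nat.Prime q) := ⟨hqp⟩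
    have hq1 : 0 < q := hqp.pos
    have hkq : k ≤ q := by
      have : k ≤ M := le_trans hKk (by calc K = K * 1 := (mul_one K).symm
        _ ≤ K * n := Nat.mul_le_mul_left K hn0)
      omega
    have hKnq : 4 * (ℓ + 1) * k ^ ℓ * n < q := by
      have h4 : 4 * (ℓ + 1) * k ^ ℓ * n ≤ K * n := Nat.mul_le_mul_right n (by omega)
      omega
    -- the host hypergraph
    have hHcard : ∀ E ∈ Finset.univ.image (edgeOf k ℓ q), E.card = k := by
      intro E hE
      obtain ⟨a, -, rfl⟩ := Finset.mem_image.mp hE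
      exact card_edgeOf a
    have hHsub : ∀ E ∈ Finset.univ.image (edgeOf k ℓ q), E ⊆ Finset.range (k * q) := by
      intro E hE
      obtain ⟨a, -, rfl⟩ := Finset.mem_image.mp hE
      intro w hw
      rw [edgeOf, Finset.mem_image] at hw
      obtain ⟨i, -, rfl⟩ := hw
      exact Finset.mem_range.mpr (enc_lt i _)
    set HH : KHypergraph k := ⟨Finset.range (k * q), Finset.univ.image (edgeOf k ℓ q),
      hHcard, hHsub⟩ with hHH
    have hEdges : HH.edges = Finset.univ.image (edgeOf k ℓ q) := rfl
    have hEcard : HH.edges.card = q ^ (ℓ + 1) := by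
      rw [hEdges, Finset.card_image_of_injective _ (edgeOf_injective h2 hkq),
        Finset.card_univ, Fintype.card_fun, ZMod.card, Fintype.card_fin]
    have hqpow : 0 < q ^ ℓ := Nat.pow_pos hq1
    have harrows : HH.Arrows T := by
      intro χ
      -- majority colour
      have hmaj : ∃ c : Bool, q ^ (ℓ + 1) ≤ 2 * (HH.edges.filter fun E => χ E = c).card := by
        by_contra hcon
        push_neg at hcon
        have hct := hcon true
        have hcf := hcon false
        have hsplit : ((HH.edges.filter fun E => χ E = true).card
            + (HH.edges.filter fun E => ¬ (χ E = true)).card) = HH.edges.card :=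
          Finset.card_filter_add_card_filter_not _
        have heq : (HH.edges.filter fun E => χ E = false)
            = (HH.edges.filter fun E => ¬ (χ E = true)) := by
          apply Finset.filter_congr
          intro E _
          simp
        rw [heq] at hcf
        omega
      obtain ⟨c, hc⟩ := hmaj
      set Fc : Finset (Finset ℕ) := HH.edges.filter (fun E => χ E = c) with hFc
      set δ : ℕ → ℕ := fun s => n * q ^ (ℓ - s) + 1 with hδ
      obtain ⟨G, hGFc, hGgood, hGbound⟩ := clean δ ℓ Fc.card Fc le_rfl
      have hGH : G ⊆ HH.edges := hGFc.trans (Finset.filter_subset _ _)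
      -- bounding the number of covered sets
      have hcov : ∀ s, s ≤ ℓ → (covered Fc s).card ≤ (k * q) ^ s := by
        intro s hs
        have hsub : covered Fc s ⊆ (Finset.range (k * q)).powersetCard s := by
          intro S hS
          obtain ⟨hcard, E, hE, hSE⟩ := mem_covered.mp hS
          have hEH : E ∈ HH.edges := (Finset.mem_filter.mp hE).1
          exact Finset.mem_powersetCard.mpr ⟨hSE.trans (hHsub E hEH), hcard⟩
        calc (covered Fc s).card ≤ ((Finset.range (k * q)).powersetCard s).card :=
              Finset.card_le_card hsub
          _ = (k * q).choose s := by rw [Finset.card_powersetCard, Finset.card_range]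
          _ ≤ (k * q) ^ s := Nat.choose_le_pow _ _
      -- sum bound
      have hterm : ∀ s ∈ Finset.range (ℓ + 1), δ s * (covered Fc s).card
          ≤ 2 * k ^ ℓ * n * q ^ ℓ := by
        intro s hs
        rw [Finset.mem_range] at hs
        have hsl : s ≤ ℓ := by omega
        calc δ s * (covered Fc s).card ≤ (n * q ^ (ℓ - s) + 1) * (k * q) ^ s :=
              Nat.mul_le_mul_left _ (hcov s hsl)
          _ = n * k ^ s * (q ^ (ℓ - s) * q ^ s) + k ^ s * q ^ s := by
              rw [mul_pow]; ring
          _ = n * k ^ s * q ^ ℓ + k ^ s * q ^ s := by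
              rw [← pow_add, Nat.sub_add_cancel hsl]
          _ ≤ n * k ^ ℓ * q ^ ℓ + k ^ ℓ * q ^ ℓ := by
              have hks : k ^ s ≤ k ^ ℓ := Nat.pow_le_pow_right (by omega) hsl
              have hqs : q ^ s ≤ q ^ ℓ := Nat.pow_le_pow_right hq1 hsl
              exact Nat.add_le_add
                (Nat.mul_le_mul (Nat.mul_le_mul_left n hks) (le_refl (q ^ ℓ)))
                (Nat.mul_le_mul hks hqs)
          _ ≤ 2 * k ^ ℓ * n * q ^ ℓ := by
              have h2' : k ^ ℓ * q ^ ℓ ≤ n * (k ^ ℓ * q ^ ℓ) := by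
                calc k ^ ℓ * q ^ ℓ = 1 * (k ^ ℓ * q ^ ℓ) := (one_mul _).symm
                  _ ≤ n * (k ^ ℓ * q ^ ℓ) := Nat.mul_le_mul_right _ hn0
              calc n * k ^ ℓ * q ^ ℓ + k ^ ℓ * q ^ ℓ
                  ≤ n * k ^ ℓ * q ^ ℓ + n * (k ^ ℓ * q ^ ℓ) := Nat.add_le_add_left h2' _
                _ = 2 * k ^ ℓ * n * q ^ ℓ := by ring
      have hBsum : ∑ s ∈ Finset.range (ℓ + 1), δ s * (covered Fc s).card
          ≤ (ℓ + 1) * (2 * k ^ ℓ * n * q ^ ℓ) := by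
        calc ∑ s ∈ Finset.range (ℓ + 1), δ s * (covered Fc s).card
            ≤ (Finset.range (ℓ + 1)).card • (2 * k ^ ℓ * n * q ^ ℓ) :=
              Finset.sum_le_card_nsmul _ _ _ hterm
          _ = (ℓ + 1) * (2 * k ^ ℓ * n * q ^ ℓ) := by
              rw [Finset.card_range, smul_eq_mul]
      -- G is nonempty
      have hGne : G.Nonempty := by
        rw [Finset.nonempty_iff_ne_empty]
        intro hGe
        rw [hGe, Finset.card_empty, zero_add] at hGbound
        have h2B : q ^ (ℓ + 1) ≤ 2 * ((ℓ + 1) * (2 * k ^ ℓ * n * q ^ ℓ)) := by omega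
        have hlt : 2 * ((ℓ + 1) * (2 * k ^ ℓ * n * q ^ ℓ)) < q ^ (ℓ + 1) := by
          have heq2 : 2 * ((ℓ + 1) * (2 * k ^ ℓ * n * q ^ ℓ)) = (4 * (ℓ + 1) * k ^ ℓ * n) * q ^ ℓ := by
            ring
          rw [heq2, pow_succ, mul_comm (q ^ ℓ) q]
          exact (Nat.mul_lt_mul_right hqpow).mpr hKnq
        omega
      -- extension property
      have hext : ∀ S U : Finset ℕ, S.card ≤ ℓ → (∃ E ∈ G, S ⊆ E) → U.card ≤ n →
          ∃ E ∈ G, S ⊆ E ∧ (E \ S) ∩ U = ∅ := by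
        intro S U hSl hScov hU
        set A : Finset (Finset ℕ) := G.filter (fun E => S ⊆ E) with hA
        have hAcard : δ S.card ≤ A.card := hGgood S hSl hScov
        set Bad : Finset (Finset ℕ) := A.filter (fun E => ((E \ S) ∩ U).Nonempty) with hBad
        have hBadsub : Bad ⊆ (U \ S).biUnion
            (fun v => HH.edges.filter (fun E => insert v S ⊆ E)) := by
          intro E hE
          rw [hBad, Finset.mem_filter] at hE
          have hEA := hE.1
          obtain ⟨v, hv⟩ := hE.2
          rw [Finset.mem_inter, Finset.mem_sdiff] at hv
          rw [hA, Finset.mem_filter] at hEA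
          refine Finset.mem_biUnion.mpr ⟨v, ?_, ?_⟩
          · exact Finset.mem_sdiff.mpr ⟨hv.2, hv.1.2⟩
          · refine Finset.mem_filter.mpr ⟨hGH hEA.1, ?_⟩
            exact Finset.insert_subset hv.1.1 hEA.2
        have hfib : ∀ v ∈ U \ S,
            (HH.edges.filter (fun E => insert v S ⊆ E)).card ≤ q ^ (ℓ - S.card) := by
          intro v hv
          have hvS : v ∉ S := (Finset.mem_sdiff.mp hv).2
          have hWcard : (insert v S).card = S.card + 1 := Finset.card_insert_of_notMem hvS
          have hb := fiber_bound h2 hkq (insert v S) (by omega) (by omega)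
          have him : HH.edges.filter (fun E => insert v S ⊆ E)
              = ((Finset.univ : Finset (Fin (ℓ+1) → ZMod q)).filter
                (fun a => insert v S ⊆ edgeOf k ℓ q a)).image (edgeOf k ℓ q) := by
            rw [hEdges, Finset.filter_image]
          calc (HH.edges.filter (fun E => insert v S ⊆ E)).card
              ≤ ((Finset.univ : Finset (Fin (ℓ+1) → ZMod q)).filter
                (fun a => insert v S ⊆ edgeOf k ℓ q a)).card := by
                rw [him]; exact Finset.card_image_le
            _ ≤ q ^ (ℓ + 1 - (insert v S).card) := hb
            _ = q ^ (ℓ - S.card) := by rw [hWcard]; congr 1; omega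
        have hBadcard : Bad.card ≤ n * q ^ (ℓ - S.card) := by
          calc Bad.card ≤ ((U \ S).biUnion
                (fun v => HH.edges.filter (fun E => insert v S ⊆ E))).card :=
                Finset.card_le_card hBadsub
            _ ≤ ∑ v ∈ U \ S, (HH.edges.filter (fun E => insert v S ⊆ E)).card :=
                Finset.card_biUnion_le
            _ ≤ ∑ v ∈ U \ S, q ^ (ℓ - S.card) := Finset.sum_le_sum hfib
            _ = (U \ S).card * q ^ (ℓ - S.card) := by rw [Finset.sum_const, smul_eq_mul]
            _ ≤ n * q ^ (ℓ - S.card) := by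
                apply Nat.mul_le_mul_right
                calc (U \ S).card ≤ U.card := Finset.card_le_card (Finset.sdiff_subset)
                  _ ≤ n := hU
        have hBadA : Bad ⊆ A := Finset.filter_subset _ _
        have hlt : Bad.card < A.card := by
          have : δ S.card = n * q ^ (ℓ - S.card) + 1 := rfl
          omega
        have hne : (A \ Bad).Nonempty := by
          rw [← Finset.card_pos, Finset.card_sdiff_of_subset hBadA]
          omega
        obtain ⟨E, hE⟩ := hne
        rw [Finset.mem_sdiff] at hE
        have hEA := Finset.mem_filter.mp hE.1
        refine ⟨E, hEA.1, hEA.2, ?_⟩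
        have : ¬ ((E \ S) ∩ U).Nonempty := fun hcon =>
          hE.2 (Finset.mem_filter.mpr ⟨hE.1, hcon⟩)
        exact Finset.not_nonempty_iff_eq_empty.mp this
      obtain ⟨f, hcopy, hfG⟩ := embed HH G hGH hGne hext T hT (le_of_eq hn)
      exact ⟨f, c, hcopy, fun e' he' =>
        (Finset.mem_filter.mp (hGFc (hfG e' he'))).2⟩
    -- conclude
    have hle : T.sizeRamsey ≤ q ^ (ℓ + 1) := Nat.sInf_le ⟨HH, harrows, hEcard⟩
    have hq2 : q ≤ 2 * K * n := by
      have : 2 * M = 2 * K * n := by rw [hM]; ring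
      omega
    calc (T.sizeRamsey : ℝ) ≤ ((q ^ (ℓ + 1) : ℕ) : ℝ) := Nat.cast_le.mpr hle
      _ ≤ (((2 * K * n) ^ (ℓ + 1) : ℕ) : ℝ) :=
          Nat.cast_le.mpr (Nat.pow_le_pow_left hq2 _)
      _ = ((2 * K : ℕ) : ℝ) ^ (ℓ + 1) * (n : ℝ) ^ (ℓ + 1) := by push_cast; ring
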